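/- In a nonamenable finitely generated group Γ with Cayley graph G, there exists D > 1 such that for all x ∈ Γ, r ≥ 1, and 0 ≤ i < r, the sphere sizes satisfy 1/D < |S_{i+1}(x)| / |S_i(x)| < D, where S_i(x) = {y : d(x,y) = i}. -/

import Mathlib

/-- The (left) Cayley graph of `Γ` with respect to `S`. -/
def cayleyGraph (Γ : Type*) [Group Γ] (S : Finset Γ) : SimpleGraph Γ :=
  SimpleGraph.fromRel (fun x y => ∃ s ∈ S, y = s * x)

/-- Amenability of a finitely generated group, via existence of a Følner
sequence. -/
def IsAmenableFG (Γ : Type*) [Group Γ] [DecidableEq Γ] : Prop :=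
  ∃ F : ℕ → Finset Γ, (∀ n, (F n).Nonempty) ∧
    ∀ ε : ℝ, 0 < ε → ∀ L : Finset Γ, ∃ N : ℕ, ∀ n ≥ N, ∀ g ∈ L,
      (((F n).image (fun x => g * x) ∪ F n).card : ℝ) < (1 + ε) * (F n).card

set_option linter.unusedSectionVars false
set_option maxHeartbeats 1000000

namespace SphereAux

open SimpleGraph Finset

variable {Γ : Type*} [Group Γ] [DecidableEq Γ] {S : Finset Γ}

lemma cayley_adj_iff (hSsym : ∀ s ∈ S, s⁻¹ ∈ S) {x y : Γ} :
    (cayleyGraph Γ S).Adj x y ↔ x ≠ y ∧ ∃ s ∈ S, y = s * x := by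
  simp only [cayleyGraph, SimpleGraph.fromRel_adj]
  constructor
  · rintro ⟨hne, ⟨s, hs, rfl⟩ | ⟨s, hs, hx⟩⟩
    · exact ⟨hne, s, hs, rfl⟩
    · exact ⟨hne, s⁻¹, hSsym s hs, by rw [hx, inv_mul_cancel_left]⟩
  · rintro ⟨hne, s, hs, rfl⟩
    exact ⟨hne, Or.inl ⟨s, hs, rfl⟩⟩

lemma cayley_adj_of {s y : Γ} (hs : s ∈ S) (hne : y ≠ s * y) :
    (cayleyGraph Γ S).Adj (s * y) y :=
  ⟨fun h => hne h.symm, Or.inr ⟨s, hs, rfl⟩⟩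

/-- The ball of radius `n` around `x`, as a finset. -/
def ballF (S : Finset Γ) (x : Γ) : ℕ → Finset Γ
  | 0 => {x}
  | n + 1 => ballF S x n ∪ S.biUnion fun s => (ballF S x n).image (fun z => s * z)

lemma self_mem_ballF (x : Γ) : ∀ n, x ∈ ballF S x n
  | 0 => by simp [ballF]
  | n + 1 => by simp only [ballF, mem_union]; exact Or.inl (self_mem_ballF x n)

lemma mem_ballF_of_walk (hSsym : ∀ s ∈ S, s⁻¹ ∈ S) {x : Γ} :
    ∀ {n : ℕ} {y : Γ} (p : (cayleyGraph Γ S).Walk y x), p.length ≤ n → y ∈ ballF S x n := by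
  intro n
  induction n with
  | zero =>
    intro y p hp
    have := SimpleGraph.Walk.eq_of_length_eq_zero (Nat.le_zero.mp hp)
    simp [ballF, this]
  | succ n ih =>
    intro y p hp
    cases p with
    | nil => exact self_mem_ballF x (n + 1)
    | cons h q =>
      rename_i z
      have hz : z ∈ ballF S x n := ih q (by simpa using Nat.succ_le_succ_iff.mp hp)
      obtain ⟨hne, s, hs, rfl⟩ := (cayley_adj_iff hSsym).mp h.symm
      simp only [ballF, mem_union, mem_biUnion]
      exact Or.inr ⟨s, hs, mem_image_of_mem _ hz⟩

lemma exists_walk_of_mem_ballF {x : Γ} :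
    ∀ {n : ℕ} {y : Γ}, y ∈ ballF S x n → ∃ p : (cayleyGraph Γ S).Walk y x, p.length ≤ n := by
  intro n
  induction n with
  | zero =>
    intro y hy
    simp only [ballF, mem_singleton] at hy
    subst hy
    exact ⟨SimpleGraph.Walk.nil, le_refl _⟩
  | succ n ih =>
    intro y hy
    simp only [ballF, mem_union, mem_biUnion, mem_image] at hy
    rcases hy with hy | ⟨s, hs, z, hz, rfl⟩
    · obtain ⟨p, hp⟩ := ih hy
      exact ⟨p, hp.trans (Nat.le_succ n)⟩
    · obtain ⟨p, hp⟩ := ih hz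
      by_cases hne : z = s * z
      · rw [← hne]
        exact ⟨p, hp.trans (Nat.le_succ n)⟩
      · exact ⟨SimpleGraph.Walk.cons (cayley_adj_of hs hne) p,
          by simpa using Nat.succ_le_succ hp⟩

lemma dist_le_of_mem_ballF {x y : Γ} {n : ℕ} (h : y ∈ ballF S x n) :
    (cayleyGraph Γ S).dist x y ≤ n := by
  obtain ⟨p, hp⟩ := exists_walk_of_mem_ballF h
  calc (cayleyGraph Γ S).dist x y = (cayleyGraph Γ S).dist y x := SimpleGraph.dist_comm
    _ ≤ p.length := SimpleGraph.dist_le p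
    _ ≤ n := hp

lemma reachable_of_mem_ballF {x y : Γ} {n : ℕ} (h : y ∈ ballF S x n) :
    (cayleyGraph Γ S).Reachable x y := by
  obtain ⟨p, _⟩ := exists_walk_of_mem_ballF h
  exact p.reverse.reachable

lemma mem_ballF_iff (hSsym : ∀ s ∈ S, s⁻¹ ∈ S)
    (hconn : (cayleyGraph Γ S).Connected) {x y : Γ} {n : ℕ} :
    y ∈ ballF S x n ↔ (cayleyGraph Γ S).dist x y ≤ n := by
  refine ⟨dist_le_of_mem_ballF, fun h => ?_⟩
  obtain ⟨p, hp⟩ := (hconn y x).exists_walk_length_eq_dist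
  exact mem_ballF_of_walk hSsym p (by rw [hp, SimpleGraph.dist_comm]; exact h)

lemma cayley_reachable_mul (hSgen : Subgroup.closure (S : Set Γ) = ⊤) (g : Γ) :
    ∀ x : Γ, (cayleyGraph Γ S).Reachable x (g * x) := by
  have hg : g ∈ Subgroup.closure (S : Set Γ) := hSgen ▸ Subgroup.mem_top g
  induction hg using Subgroup.closure_induction with
  | mem s hs =>
    intro x
    by_cases hne : x = s * x
    · rw [← hne]
    · exact (cayley_adj_of hs hne).symm.reachable
  | one => intro x; rw [one_mul]
  | mul a b _ _ iha ihb =>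
    intro x
    have h1 := ihb x
    have h2 := iha (b * x)
    rw [← mul_assoc] at h2
    exact h1.trans h2
  | inv a _ iha =>
    intro x
    have := iha (a⁻¹ * x)
    rw [mul_inv_cancel_left] at this
    exact this.symm

lemma cayley_preconnected (hSgen : Subgroup.closure (S : Set Γ) = ⊤) :
    (cayleyGraph Γ S).Preconnected := by
  intro x y
  have := cayley_reachable_mul hSgen (y * x⁻¹) x
  rwa [inv_mul_cancel_right] at this

lemma cayley_connected (hSgen : Subgroup.closure (S : Set Γ) = ⊤) :
    (cayleyGraph Γ S).Connected := by
  haveI : Nonempty Γ := ⟨1⟩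
  exact SimpleGraph.Connected.mk (cayley_preconnected hSgen)

/-- Right multiplication as a graph isomorphism of the Cayley graph. -/
def cayleyMulRight (S : Finset Γ) (g : Γ) : cayleyGraph Γ S ≃g cayleyGraph Γ S where
  toEquiv := Equiv.mulRight g
  map_rel_iff' := by
    intro a b
    simp only [Equiv.coe_mulRight, cayleyGraph, SimpleGraph.fromRel_adj, ne_eq, mul_left_inj]
    constructor
    · rintro ⟨hne, ⟨s, hs, h⟩ | ⟨s, hs, h⟩⟩
      · exact ⟨hne, Or.inl ⟨s, hs, by rw [← mul_assoc] at h; exact mul_right_cancel h⟩⟩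
      · exact ⟨hne, Or.inr ⟨s, hs, by rw [← mul_assoc] at h; exact mul_right_cancel h⟩⟩
    · rintro ⟨hne, ⟨s, hs, rfl⟩ | ⟨s, hs, rfl⟩⟩
      · exact ⟨hne, Or.inl ⟨s, hs, mul_assoc _ _ _⟩⟩
      · exact ⟨hne, Or.inr ⟨s, hs, mul_assoc _ _ _⟩⟩

lemma cayley_dist_mul_right (hSgen : Subgroup.closure (S : Set Γ) = ⊤) (x y g : Γ) :
    (cayleyGraph Γ S).dist (x * g) (y * g) = (cayleyGraph Γ S).dist x y := by
  have key : ∀ a b c : Γ, (cayleyGraph Γ S).dist (a * c) (b * c) ≤ (cayleyGraph Γ S).dist a b := by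
    intro a b c
    obtain ⟨p, hp⟩ := (cayley_preconnected hSgen a b).exists_walk_length_eq_dist
    have := SimpleGraph.dist_le (p.map (cayleyMulRight S c).toHom)
    simp [hp] at this
    exact this
  refine le_antisymm (key x y g) ?_
  have := key (x * g) (y * g) g⁻¹
  simpa using this


end SphereAux

namespace SphereAux
open SimpleGraph Finset
open scoped Classical

variable {Γ : Type*} [Group Γ] [DecidableEq Γ] {S : Finset Γ}

/-- The sphere of radius `i` around `x`, as a finset. -/
noncomputable def sphF (S : Finset Γ) (x : Γ) (i : ℕ) : Finset Γ :=
  (ballF S x i).filter (fun y => (cayleyGraph Γ S).dist x y = i)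

lemma mem_sphF (hSsym : ∀ s ∈ S, s⁻¹ ∈ S) (hSgen : Subgroup.closure (S : Set Γ) = ⊤)
    {x y : Γ} {i : ℕ} : y ∈ sphF S x i ↔ (cayleyGraph Γ S).dist x y = i := by
  simp only [sphF, mem_filter, and_iff_right_iff_imp]
  intro h
  exact (mem_ballF_iff hSsym (cayley_connected hSgen)).mpr h.le

lemma coe_sphF (hSsym : ∀ s ∈ S, s⁻¹ ∈ S) (hSgen : Subgroup.closure (S : Set Γ) = ⊤)
    (x : Γ) (i : ℕ) : {y : Γ | (cayleyGraph Γ S).dist x y = i} = ↑(sphF S x i) := by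
  ext y
  simp [mem_sphF hSsym hSgen]

/-- Decomposition: a point at distance `i+1` is `s * z` for a point `z` at distance `i`. -/
lemma exists_pred (hSsym : ∀ s ∈ S, s⁻¹ ∈ S) (hSgen : Subgroup.closure (S : Set Γ) = ⊤)
    {x y : Γ} {i : ℕ} (h : (cayleyGraph Γ S).dist x y = i + 1) :
    ∃ z s, s ∈ S ∧ (cayleyGraph Γ S).dist x z = i ∧ y = s * z := by
  have hne : y ≠ x := by
    rintro rfl
    simp [SimpleGraph.dist_self] at h
  obtain ⟨p, hp⟩ := (cayley_preconnected hSgen y x).exists_walk_length_eq_dist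
  obtain ⟨z, hadj, q, hq⟩ := p.exists_eq_cons_of_ne hne
  have hql : q.length = i := by
    have := hp
    rw [hq] at this
    simp only [SimpleGraph.Walk.length_cons] at this
    rw [SimpleGraph.dist_comm, h] at this
    omega
  have hle : (cayleyGraph Γ S).dist x z ≤ i := by
    rw [SimpleGraph.dist_comm]
    exact hql ▸ SimpleGraph.dist_le q
  have hge : i ≤ (cayleyGraph Γ S).dist x z := by
    have htri := (cayley_connected hSgen).dist_triangle (u := x) (v := z) (w := y)
    have h1 : (cayleyGraph Γ S).dist z y ≤ 1 := by
      have : (cayleyGraph Γ S).dist z y = 1 := SimpleGraph.dist_eq_one_iff_adj.mpr hadj.symm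
      omega
    omega
  obtain ⟨_, s, hs, rfl⟩ := (cayley_adj_iff hSsym).mp hadj.symm
  exact ⟨z, s, hs, le_antisymm hle hge, rfl⟩

lemma sphere_nonempty (hSsym : ∀ s ∈ S, s⁻¹ ∈ S) (hSgen : Subgroup.closure (S : Set Γ) = ⊤)
    [Infinite Γ] (x : Γ) (i : ℕ) : ∃ y, (cayleyGraph Γ S).dist x y = i := by
  have descent : ∀ j y, (cayleyGraph Γ S).dist x y = j →
      ∀ k ≤ j, ∃ z, (cayleyGraph Γ S).dist x z = k := by
    intro j
    induction j with
    | zero => intro y hy k hk; exact ⟨y, by omega⟩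
    | succ j ih =>
      intro y hy k hk
      rcases Nat.eq_or_lt_of_le hk with h | h
      · exact ⟨y, h ▸ hy⟩
      · obtain ⟨z, s, _, hz, _⟩ := exists_pred hSsym hSgen hy
        exact ih z hz k (by omega)
  obtain ⟨y, hy⟩ := Finset.exists_notMem (ballF S x i)
  have : i < (cayleyGraph Γ S).dist x y := by
    by_contra hcon
    exact hy ((mem_ballF_iff hSsym (cayley_connected hSgen)).mpr (by omega))
  exact descent _ y rfl i (by omega)

lemma sphF_succ_card_le (hSsym : ∀ s ∈ S, s⁻¹ ∈ S) (hSgen : Subgroup.closure (S : Set Γ) = ⊤)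
    (x : Γ) (i : ℕ) : (sphF S x (i + 1)).card ≤ S.card * (sphF S x i).card := by
  have hsub : sphF S x (i + 1) ⊆ S.biUnion (fun s => (sphF S x i).image (fun z => s * z)) := by
    intro y hy
    obtain ⟨z, s, hs, hz, rfl⟩ := exists_pred hSsym hSgen ((mem_sphF hSsym hSgen).mp hy)
    exact mem_biUnion.mpr ⟨s, hs, mem_image_of_mem _ ((mem_sphF hSsym hSgen).mpr hz)⟩
  calc (sphF S x (i + 1)).card ≤ _ := Finset.card_le_card hsub
    _ ≤ ∑ s ∈ S, ((sphF S x i).image (fun z => s * z)).card := Finset.card_biUnion_le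
    _ ≤ ∑ _s ∈ S, (sphF S x i).card := Finset.sum_le_sum (fun s _ => Finset.card_image_le)
    _ = S.card * (sphF S x i).card := by rw [Finset.sum_const, smul_eq_mul]

lemma sphF_card_le_pow (hSsym : ∀ s ∈ S, s⁻¹ ∈ S) (hSgen : Subgroup.closure (S : Set Γ) = ⊤)
    (x : Γ) (i : ℕ) : ∀ j, (sphF S x (i + 1 + j)).card ≤ S.card ^ j * (sphF S x (i + 1)).card := by
  intro j
  induction j with
  | zero => simp
  | succ j ih =>
    have h1 : i + 1 + (j + 1) = (i + 1 + j) + 1 := by omega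
    rw [h1]
    calc (sphF S x ((i + 1 + j) + 1)).card ≤ S.card * (sphF S x (i + 1 + j)).card :=
          sphF_succ_card_le hSsym hSgen x _
      _ ≤ S.card * (S.card ^ j * (sphF S x (i + 1)).card) := Nat.mul_le_mul_left _ ih
      _ = S.card ^ (j + 1) * (sphF S x (i + 1)).card := by ring

lemma ballF_decomp (hSsym : ∀ s ∈ S, s⁻¹ ∈ S) (hSgen : Subgroup.closure (S : Set Γ) = ⊤)
    (x : Γ) (i M : ℕ) :
    (ballF S x (i + M)).card ≤
      (ballF S x i).card + ∑ j ∈ Finset.range M, (sphF S x (i + 1 + j)).card := by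
  have hconn := cayley_connected hSgen
  have hsub : ballF S x (i + M) ⊆
      ballF S x i ∪ (Finset.range M).biUnion (fun j => sphF S x (i + 1 + j)) := by
    intro y hy
    have hd : (cayleyGraph Γ S).dist x y ≤ i + M := (mem_ballF_iff hSsym hconn).mp hy
    rcases le_or_gt ((cayleyGraph Γ S).dist x y) i with h | h
    · exact mem_union_left _ ((mem_ballF_iff hSsym hconn).mpr h)
    · refine mem_union_right _ (mem_biUnion.mpr ⟨(cayleyGraph Γ S).dist x y - i - 1,
        Finset.mem_range.mpr (by omega), (mem_sphF hSsym hSgen).mpr (by omega)⟩)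
  calc (ballF S x (i + M)).card ≤ _ := Finset.card_le_card hsub
    _ ≤ (ballF S x i).card + ((Finset.range M).biUnion (fun j => sphF S x (i + 1 + j))).card :=
        Finset.card_union_le _ _
    _ ≤ _ := by gcongr; exact Finset.card_biUnion_le

end SphereAux
namespace SphereAux
open SimpleGraph Finset

variable {Γ : Type*} [Group Γ] [DecidableEq Γ] {S : Finset Γ}

lemma amenable_of_finite' (hfin : Finite Γ) : IsAmenableFG Γ := by
  haveI : Nonempty Γ := ⟨1⟩
  haveI : Fintype Γ := Fintype.ofFinite Γ
  refine ⟨fun _ => Finset.univ, fun _ => Finset.univ_nonempty, ?_⟩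
  intro ε hε L
  refine ⟨0, fun n _ g _ => ?_⟩
  have hsub : ((Finset.univ : Finset Γ).image (fun x => g * x) ∪ Finset.univ) = Finset.univ :=
    Finset.union_eq_right.mpr (Finset.subset_univ _)
  rw [hsub]
  have hpos : (0 : ℝ) < (Finset.univ : Finset Γ).card := by
    exact_mod_cast Finset.card_pos.mpr Finset.univ_nonempty
  nlinarith

lemma folner_fail (hnonamen : ¬ IsAmenableFG Γ) :
    ∃ ε : ℝ, 0 < ε ∧ ∃ m : ℕ, ∀ F : Finset Γ, F.Nonempty →
      ∃ g : Γ, (cayleyGraph Γ S).dist 1 g ≤ m ∧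
        (1 + ε) * F.card ≤ ((F.image (fun x => g * x) ∪ F).card : ℝ) := by
  by_contra hcon
  push_neg at hcon
  apply hnonamen
  choose F hFne hF using fun n : ℕ => hcon (1 / (n + 1)) (by positivity) n
  refine ⟨F, hFne, ?_⟩
  intro ε hε L
  obtain ⟨N₁, hN₁⟩ := exists_nat_gt (1 / ε)
  refine ⟨max N₁ (L.sup (fun g => (cayleyGraph Γ S).dist 1 g)), fun n hn g hg => ?_⟩
  have h1 : (cayleyGraph Γ S).dist 1 g ≤ n :=
    le_trans (Finset.le_sup hg) (le_trans (le_max_right _ _) hn)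
  have h2 := hF n g h1
  have hn1 : (0 : ℝ) < (n : ℝ) + 1 := by positivity
  have hNn : (1 : ℝ) / ε < (n : ℝ) + 1 := by
    have : (N₁ : ℝ) ≤ n := by exact_mod_cast le_trans (le_max_left _ _) hn
    linarith
  have hεn : (1 : ℝ) / ((n : ℝ) + 1) < ε := by
    rw [div_lt_iff₀ hn1]
    have := (div_lt_iff₀ hε).mp hNn
    linarith
  have hcard : (0 : ℝ) ≤ ((F n).card : ℝ) := by positivity
  calc (((F n).image (fun x => g * x) ∪ F n).card : ℝ)
      < (1 + 1 / ((n : ℝ) + 1)) * (F n).card := by exact_mod_cast h2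
    _ ≤ (1 + ε) * (F n).card := by nlinarith

end SphereAux


open SphereAux Finset in
/-- In a nonamenable finitely generated group, sphere sizes in the Cayley graph
grow and shrink by at most a uniformly bounded factor: there is `D > 1` with
`1/D < |S_{i+1}(x)|/|S_i(x)| < D` for all `x`, `r ≥ 1` and `0 ≤ i < r`. -/
theorem sphere_ratio_bounded_of_nonamenable
    {Γ : Type*} [Group Γ] [DecidableEq Γ]
    (S : Finset Γ) (hSsym : ∀ s ∈ S, s⁻¹ ∈ S)
    (hSgen : Subgroup.closure (S : Set Γ) = ⊤)
    (hnonamen : ¬ IsAmenableFG Γ) :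
    ∃ D : ℝ, 1 < D ∧ ∀ (x : Γ) (r i : ℕ), 1 ≤ r → i < r →
      1 / D < ({y : Γ | (cayleyGraph Γ S).dist x y = i + 1}.ncard : ℝ) /
        ({y : Γ | (cayleyGraph Γ S).dist x y = i}.ncard : ℝ) ∧
      ({y : Γ | (cayleyGraph Γ S).dist x y = i + 1}.ncard : ℝ) /
        ({y : Γ | (cayleyGraph Γ S).dist x y = i}.ncard : ℝ) < D := by
  haveI : Infinite Γ := by
    by_contra h
    exact hnonamen (amenable_of_finite' (not_infinite_iff_finite.mp h))
  have hSne : S.Nonempty := by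
    rcases S.eq_empty_or_nonempty with h | h
    · exfalso
      rw [h] at hSgen
      obtain ⟨g, hg⟩ := exists_ne (1 : Γ)
      have : g ∈ Subgroup.closure ((∅ : Finset Γ) : Set Γ) := hSgen ▸ Subgroup.mem_top g
      rw [Finset.coe_empty, Subgroup.closure_empty, Subgroup.mem_bot] at this
      exact hg this
    · exact h
  have hK : 1 ≤ S.card := Finset.card_pos.mpr hSne
  obtain ⟨ε, hε, m, hfail⟩ := folner_fail (S := S) hnonamen
  set M := m + 1 with hM
  set K := S.card with hKdef
  set C : ℝ := (M : ℝ) * (K : ℝ) ^ M with hC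
  have hCpos : 0 < C := by positivity
  set D : ℝ := max (K : ℝ) (C / ε) + 1 with hD
  have hCD : C / ε ≤ D - 1 := by rw [hD]; simp [le_max_right]
  have hKD : (K : ℝ) < D := by
    have := le_max_left (K : ℝ) (C / ε)
    rw [hD]; linarith
  have hD1 : 1 < D := by
    have h1 : 0 < C / ε := by positivity
    have := le_max_right (K : ℝ) (C / ε)
    rw [hD]; linarith
  have hDpos : 0 < D := by linarith
  refine ⟨D, hD1, ?_⟩
  intro x r i _ _
  -- rewrite spheres as finsets
  rw [coe_sphF hSsym hSgen x (i + 1), coe_sphF hSsym hSgen x i, Set.ncard_coe_finset,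
    Set.ncard_coe_finset]
  set a := (sphF S x (i + 1)).card with ha
  set b := (sphF S x i).card with hb
  have hapos : 0 < a := by
    obtain ⟨y, hy⟩ := sphere_nonempty hSsym hSgen x (i + 1)
    exact Finset.card_pos.mpr ⟨y, (mem_sphF hSsym hSgen).mpr hy⟩
  have hbpos : 0 < b := by
    obtain ⟨y, hy⟩ := sphere_nonempty hSsym hSgen x i
    exact Finset.card_pos.mpr ⟨y, (mem_sphF hSsym hSgen).mpr hy⟩
  have hA : (0 : ℝ) < a := by exact_mod_cast hapos
  have hB : (0 : ℝ) < b := by exact_mod_cast hbpos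
  have hA1 : (1 : ℝ) ≤ a := by exact_mod_cast hapos
  -- upper bound: a ≤ K * b
  have hupper : (a : ℝ) ≤ (K : ℝ) * b := by
    exact_mod_cast sphF_succ_card_le hSsym hSgen x i
  -- lower bound: ε * b ≤ C * a
  have hlower : ε * (b : ℝ) ≤ C * a := by
    obtain ⟨g, hgm, hg⟩ := hfail (ballF S x i) ⟨x, self_mem_ballF x i⟩
    have hconn := cayley_connected hSgen
    -- the translated ball is inside the bigger ball
    have hsub : (ballF S x i).image (fun y => g * y) ∪ ballF S x i ⊆ ballF S x (i + M) := by
      intro y hy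
      rw [mem_ballF_iff hSsym hconn]
      rcases Finset.mem_union.mp hy with hy | hy
      · obtain ⟨z, hz, rfl⟩ := Finset.mem_image.mp hy
        have hz' : (cayleyGraph Γ S).dist x z ≤ i := (mem_ballF_iff hSsym hconn).mp hz
        have htri := hconn.dist_triangle (u := x) (v := z) (w := g * z)
        have hinv : (cayleyGraph Γ S).dist z (g * z) = (cayleyGraph Γ S).dist 1 g := by
          have := cayley_dist_mul_right hSgen 1 g z
          rwa [one_mul] at this
        omega
      · have := (mem_ballF_iff hSsym hconn).mp hy
        omega
    -- counting
    have hcount : (ballF S x (i + M)).card ≤ (ballF S x i).card + M * (K ^ M * a) := by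
      refine le_trans (ballF_decomp hSsym hSgen x i M) ?_
      have hsum : ∑ j ∈ Finset.range M, (sphF S x (i + 1 + j)).card ≤
          ∑ _j ∈ Finset.range M, K ^ M * a := by
        refine Finset.sum_le_sum fun j hj => ?_
        refine le_trans (sphF_card_le_pow hSsym hSgen x i j) ?_
        have : K ^ j ≤ K ^ M := Nat.pow_le_pow_right hK (by
          have := Finset.mem_range.mp hj; omega)
        exact Nat.mul_le_mul_right _ this
      rw [Finset.sum_const, Finset.card_range, smul_eq_mul] at hsum
      omega
    have h1 : (1 + ε) * ((ballF S x i).card : ℝ) ≤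
        ((ballF S x i).card : ℝ) + (M : ℝ) * ((K : ℝ) ^ M * a) := by
      refine le_trans hg ?_
      calc (((ballF S x i).image (fun y => g * y) ∪ ballF S x i).card : ℝ)
          ≤ ((ballF S x (i + M)).card : ℝ) := by exact_mod_cast Finset.card_le_card hsub
        _ ≤ _ := by exact_mod_cast hcount
    have hbF : (b : ℝ) ≤ ((ballF S x i).card : ℝ) := by
      exact_mod_cast Finset.card_le_card (Finset.filter_subset _ _)
    have hballpos : (0 : ℝ) ≤ ((ballF S x i).card : ℝ) := by positivity
    have h2 : ε * ((ballF S x i).card : ℝ) ≤ (M : ℝ) * ((K : ℝ) ^ M * a) := by nlinarith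
    calc ε * (b : ℝ) ≤ ε * ((ballF S x i).card : ℝ) := by nlinarith
      _ ≤ (M : ℝ) * ((K : ℝ) ^ M * a) := h2
      _ = C * a := by rw [hC]; ring
  constructor
  · rw [div_lt_div_iff₀ hDpos hB]
    have hCe : C ≤ (D - 1) * ε := (div_le_iff₀ hε).mp hCD
    have h4 : ε * (b : ℝ) ≤ ε * ((D - 1) * a) := by
      nlinarith [mul_le_mul_of_nonneg_right hCe hA.le]
    have hba : (b : ℝ) ≤ (D - 1) * a := le_of_mul_le_mul_left h4 hε
    have hexp : (D - 1) * a = D * a - a := by ring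
    have hgoal : (b : ℝ) < D * a := by linarith
    linarith [hgoal]
  · rw [div_lt_iff₀ hB]
    linarith [mul_lt_mul_of_pos_right hKD hB]
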